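/- Let Ω ⊆ ℝ² be open and let v : Ω → ℝ be twice continuously differentiable. Then at every point of Ω one has the identity |D²v Dv|² − (Δv)(Δ∞v) = (1/2)(|D²v|² − (Δv)²)|Dv|². -/
import Mathlib


open Real MeasureTheory
open scoped RealInnerProductSpace

noncomputable section

/-- The Euclidean plane ℝ². -/
abbrev E2 : Type := EuclideanSpace ℝ (Fin 2)

/-- Standard basis vector. -/
def ee (i : Fin 2) : E2 := EuclideanSpace.single i (1 : ℝ)

/-- Partial derivative ∂ᵢf. -/
def pd (i : Fin 2) (f : E2 → ℝ) (x : E2) : ℝ := fderiv ℝ f x (ee i)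

/-- Second partial derivative ∂ᵢ∂ⱼf. -/
def pd2 (i j : Fin 2) (f : E2 → ℝ) (x : E2) : ℝ := pd i (pd j f) x

/-- |Df|², squared Euclidean norm of the gradient. -/
def gradSq (f : E2 → ℝ) (x : E2) : ℝ := (pd 0 f x) ^ 2 + (pd 1 f x) ^ 2

/-- |Df|, Euclidean norm of the gradient. -/
def gradNorm (f : E2 → ℝ) (x : E2) : ℝ := Real.sqrt (gradSq f x)

/-- Laplacian Δf = tr D²f. -/
def lap (f : E2 → ℝ) (x : E2) : ℝ := pd2 0 0 f x + pd2 1 1 f x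

/-- ∞-Laplacian Δ∞f = D²f Df · Df. -/
def infLap (f : E2 → ℝ) (x : E2) : ℝ :=
  pd2 0 0 f x * pd 0 f x * pd 0 f x + pd2 0 1 f x * pd 0 f x * pd 1 f x +
  pd2 1 0 f x * pd 1 f x * pd 0 f x + pd2 1 1 f x * pd 1 f x * pd 1 f x

/-- |D²f|², squared Frobenius norm of the Hessian. -/
def hessFrobSq (f : E2 → ℝ) (x : E2) : ℝ :=
  (pd2 0 0 f x) ^ 2 + (pd2 0 1 f x) ^ 2 + (pd2 1 0 f x) ^ 2 + (pd2 1 1 f x) ^ 2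

/-- det D²f, determinant of the Hessian. -/
def detHess (f : E2 → ℝ) (x : E2) : ℝ :=
  pd2 0 0 f x * pd2 1 1 f x - pd2 0 1 f x * pd2 1 0 f x

/-- |D²f Df|². -/
def hessGradSq (f : E2 → ℝ) (x : E2) : ℝ :=
  (pd2 0 0 f x * pd 0 f x + pd2 0 1 f x * pd 1 f x) ^ 2 +
  (pd2 1 0 f x * pd 0 f x + pd2 1 1 f x * pd 1 f x) ^ 2

/-- Jacobian determinant of the planar map with components `F 0`, `F 1`. -/
def jdet (F : Fin 2 → E2 → ℝ) (x : E2) : ℝ :=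
  pd 0 (F 0) x * pd 1 (F 1) x - pd 1 (F 0) x * pd 0 (F 1) x

/-- Squared Frobenius norm of the Jacobian of the planar map with components `F 0`, `F 1`. -/
def jFrobSq (F : Fin 2 → E2 → ℝ) (x : E2) : ℝ :=
  (pd 0 (F 0) x) ^ 2 + (pd 1 (F 0) x) ^ 2 + (pd 0 (F 1) x) ^ 2 + (pd 1 (F 1) x) ^ 2

/-- Df · Dg. -/
def gradDot (f g : E2 → ℝ) (x : E2) : ℝ :=
  pd 0 f x * pd 0 g x + pd 1 f x * pd 1 g x

/-- D²ψ Dv · Dv. -/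
def hessQuad (ψ v : E2 → ℝ) (x : E2) : ℝ :=
  pd2 0 0 ψ x * pd 0 v x * pd 0 v x + pd2 0 1 ψ x * pd 0 v x * pd 1 v x +
  pd2 1 0 ψ x * pd 1 v x * pd 0 v x + pd2 1 1 ψ x * pd 1 v x * pd 1 v x

/-- (D²v Dv) · Dψ. -/
def hessGradDot (v ψ : E2 → ℝ) (x : E2) : ℝ :=
  (pd2 0 0 v x * pd 0 v x + pd2 0 1 v x * pd 1 v x) * pd 0 ψ x +
  (pd2 1 0 v x * pd 0 v x + pd2 1 1 v x * pd 1 v x) * pd 1 ψ x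

/-- Smooth compactly supported test function on Ω. -/
def IsTestOn (ψ : E2 → ℝ) (Ω : Set E2) : Prop :=
  ContDiff ℝ (⊤ : ℕ∞) ψ ∧ HasCompactSupport ψ ∧ tsupport ψ ⊆ Ω

/-- Components of W = |Dv|⁻¹ Dv. -/
def Wcomp (v : E2 → ℝ) (i : Fin 2) : E2 → ℝ := fun y => (gradNorm v y)⁻¹ * pd i v y


lemma pd2_eq (i j : Fin 2) (v : E2 → ℝ) (x : E2) (hv : ContDiffAt ℝ 2 v x) :
    pd2 i j v x = fderiv ℝ (fderiv ℝ v) x (ee i) (ee j) := by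
  have hdiff : DifferentiableAt ℝ (fderiv ℝ v) x := by
    have := hv.fderiv_right (m := 1) (by norm_num)
    exact this.differentiableAt (by norm_num)
  have h : HasFDerivAt (fun y => (ContinuousLinearMap.apply ℝ ℝ (ee j)) (fderiv ℝ v y))
      ((ContinuousLinearMap.apply ℝ ℝ (ee j)).comp (fderiv ℝ (fderiv ℝ v) x)) x :=
    (ContinuousLinearMap.apply ℝ ℝ (ee j)).hasFDerivAt.comp x hdiff.hasFDerivAt
  have : pd2 i j v x = ((ContinuousLinearMap.apply ℝ ℝ (ee j)).comp
      (fderiv ℝ (fderiv ℝ v) x)) (ee i) := by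
    simp only [pd2, pd]
    rw [show pd j v = (fun y => (ContinuousLinearMap.apply ℝ ℝ (ee j)) (fderiv ℝ v y)) from rfl,
      h.fderiv]
  simpa using this

lemma pd2_symm (v : E2 → ℝ) (x : E2) (hv : ContDiffAt ℝ 2 v x) :
    pd2 0 1 v x = pd2 1 0 v x := by
  rw [pd2_eq 0 1 v x hv, pd2_eq 1 0 v x hv]
  exact hv.isSymmSndFDerivAt (by norm_num) _ _

/-- the fundamental structural identity
|D²v Dv|² − (Δv)(Δ∞v) = (1/2)(|D²v|² − (Δv)²)|Dv|² on Ω. -/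
theorem stmt_0 (Ω : Set E2) (hΩ : IsOpen Ω) (v : E2 → ℝ)
    (hv : ContDiffOn ℝ 2 v Ω) :
    ∀ x ∈ Ω,
      hessGradSq v x - lap v x * infLap v x
        = (1/2) * (hessFrobSq v x - (lap v x) ^ 2) * gradSq v x := by
  intro x hx
  have hx2 : ContDiffAt ℝ 2 v x := hv.contDiffAt (hΩ.mem_nhds hx)
  have hsym := pd2_symm v x hx2
  simp only [hessGradSq, lap, infLap, hessFrobSq, gradSq]
  rw [hsym]
  ring
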